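/- Let θ ∈ (0, π/2] and let A be a real n×n matrix with a_ii < 0 and sin(θ)·|a_ii| > Σ_{j≠i}|a_ij| for all i. Then every eigenvalue λ of A lies in the open conic sector ℂ⁰_θ = {z = x+iy : x < 0 and |y| < (−x)·tan θ}. -/

import Mathlib

/-- Diagonal ℂ⁰_θ-dominance implies the spectrum lies in the open conic sector
{z = x+iy : x < 0 and |y| < (−x)·tan θ}, expressed as |y|·cos θ < (−x)·sin θ. -/
theorem sector_dominance_spectrum {n : ℕ} (θ : ℝ) (hθ : 0 < θ ∧ θ ≤ Real.pi / 2)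
    (A : Matrix (Fin n) (Fin n) ℝ)
    (hneg : ∀ i, A i i < 0)
    (hdom : ∀ i, ∑ j ∈ Finset.univ.erase i, |A i j| < Real.sin θ * |A i i|) :
    ∀ lam ∈ spectrum ℂ (A.map (Complex.ofReal)),
      lam.re < 0 ∧ |lam.im| * Real.cos θ < (-lam.re) * Real.sin θ := by
  intro lam hlam
  obtain ⟨hθ0, hθ2⟩ := hθ
  have hs : 0 < Real.sin θ := Real.sin_pos_of_pos_of_lt_pi hθ0
    (lt_of_le_of_lt hθ2 (by linarith [Real.pi_pos]))
  have hs1 : Real.sin θ ≤ 1 := Real.sin_le_one θ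
  have hc : 0 ≤ Real.cos θ := Real.cos_nonneg_of_mem_Icc ⟨by linarith, hθ2⟩
  have hsc : Real.sin θ ^ 2 + Real.cos θ ^ 2 = 1 := Real.sin_sq_add_cos_sq θ
  -- eigenvalue via Gershgorin
  have heig : Module.End.HasEigenvalue (Matrix.toLin' (A.map (Complex.ofReal))) lam := by
    rw [Module.End.hasEigenvalue_iff_mem_spectrum]
    have heq : Matrix.toLin' (A.map (Complex.ofReal))
        = Matrix.toLinAlgEquiv' (A.map (Complex.ofReal)) := rfl
    rwa [heq, AlgEquiv.spectrum_eq]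
  obtain ⟨k, hk⟩ := eigenvalue_mem_ball heig
  rw [Metric.mem_closedBall, dist_eq_norm] at hk
  have hsum : (∑ j ∈ Finset.univ.erase k, ‖(A.map (Complex.ofReal)) k j‖)
      = ∑ j ∈ Finset.univ.erase k, |A k j| := by
    refine Finset.sum_congr rfl fun j _ => ?_
    simp [Matrix.map_apply, Complex.norm_real, Real.norm_eq_abs]
  set a := A k k with ha
  have hka : 0 > a := hneg k
  have habs : |a| = -a := abs_of_neg hka
  have hr : ‖lam - (a : ℂ)‖ < Real.sin θ * (-a) := by
    calc ‖lam - (a : ℂ)‖ ≤ _ := by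
          simpa [Matrix.map_apply] using hk
      _ = ∑ j ∈ Finset.univ.erase k, |A k j| := hsum
      _ < Real.sin θ * |a| := hdom k
      _ = Real.sin θ * (-a) := by rw [habs]
  set x := lam.re
  set y := lam.im
  have hnorm : Real.sqrt ((x - a) ^ 2 + y ^ 2) < Real.sin θ * (-a) := by
    have : ‖lam - (a : ℂ)‖ = Real.sqrt ((x - a) ^ 2 + y ^ 2) := by
      rw [Complex.norm_def, Complex.normSq_apply]
      simp [Complex.sub_re, Complex.sub_im, sq]
      rfl
    rwa [this] at hr
  have hsq : (x - a) ^ 2 + y ^ 2 < (Real.sin θ * (-a)) ^ 2 := by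
    have h0 : 0 ≤ (x - a) ^ 2 + y ^ 2 := by positivity
    nlinarith [Real.sq_sqrt h0, Real.sqrt_nonneg ((x - a) ^ 2 + y ^ 2)]
  have h1s : 0 ≤ 1 - Real.sin θ ^ 2 := by nlinarith
  have hx : x < 0 := by
    by_contra h
    push_neg at h
    nlinarith [mul_nonneg h (show (0:ℝ) ≤ x - 2 * a by linarith),
      mul_nonneg h1s (sq_nonneg a), sq_nonneg y]
  refine ⟨hx, ?_⟩
  rcases eq_or_lt_of_le hc with hc0 | hc0
  · rw [← hc0]
    simp only [mul_zero]
    exact mul_pos (by linarith) hs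
  · -- y² c² < x² s²
    have key : (|y| * Real.cos θ) ^ 2 < ((-x) * Real.sin θ) ^ 2 := by
      have hc2 : 0 < Real.cos θ ^ 2 := by positivity
      have h3 : Real.cos θ ^ 2 * y ^ 2
          < Real.cos θ ^ 2 * ((Real.sin θ * -a) ^ 2 - (x - a) ^ 2) :=
        mul_lt_mul_of_pos_left (by linarith) hc2
      have h4 : Real.cos θ ^ 2 * ((Real.sin θ * -a) ^ 2 - (x - a) ^ 2)
          ≤ x ^ 2 * Real.sin θ ^ 2 := by
        have hs2 : Real.sin θ ^ 2 = 1 - Real.cos θ ^ 2 := by linarith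
        rw [mul_pow, hs2]
        nlinarith [sq_nonneg (x - Real.cos θ ^ 2 * a)]
      have hsq' : y ^ 2 * Real.cos θ ^ 2 < x ^ 2 * Real.sin θ ^ 2 := by linarith
      calc (|y| * Real.cos θ) ^ 2 = y ^ 2 * Real.cos θ ^ 2 := by
            rw [mul_pow, sq_abs]
        _ < x ^ 2 * Real.sin θ ^ 2 := hsq'
        _ = ((-x) * Real.sin θ) ^ 2 := by ring
    have hpos : 0 ≤ (-x) * Real.sin θ := by nlinarith
    exact lt_of_pow_lt_pow_left₀ 2 hpos key
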